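/- For any i, j ∈ {2,3,4}, the function g(λ₁,λ₂) = θ_i(λ₊|τ)·θ_j(λ₋|τ) satisfies (M̃₁ g)(λ₁,λ₂) = [θ₁(2h)²·θ_i(0)·θ_j(0) / (θ₁(h)²·θ_i(h)·θ_j(h))] · g(λ₁,λ₂) and (M̃₂ g)(λ₁,λ₂) = [θ₁(2h)²/θ₁(h)²]·(θ_i(0)²/θ_i(h)² + θ_j(0)²/θ_j(h)²) · g(λ₁,λ₂), for all h with θ₁(h)θ_i(h)θ_j(h) ≠ 0 and all (λ₁,λ₂) at which every theta-function denominator occurring in M̃₁ and M̃₂ is nonzero (here all theta values without explicit argument bar are taken at modulus τ). -/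

import Mathlib

open Complex

/-- The Jacobi theta function θ₁(z|τ). -/
noncomputable def th1 (τ z : ℂ) : ℂ :=
  ∑' k : ℤ, exp (2 * (Real.pi : ℂ) * I *
    ((z + 1/2) * ((k : ℂ) + 1/2) + ((k : ℂ) + 1/2)^2 * τ / 2))

/-- The Jacobi theta function θ₂(z|τ). -/
noncomputable def th2 (τ z : ℂ) : ℂ :=
  ∑' k : ℤ, exp (2 * (Real.pi : ℂ) * I *
    (z * ((k : ℂ) + 1/2) + ((k : ℂ) + 1/2)^2 * τ / 2))

/-- The Jacobi theta function θ₃(z|τ). -/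
noncomputable def th3 (τ z : ℂ) : ℂ :=
  ∑' k : ℤ, exp (2 * (Real.pi : ℂ) * I * (z * (k : ℂ) + (k : ℂ)^2 * τ / 2))

/-- The Jacobi theta function θ₄(z|τ). -/
noncomputable def th4 (τ z : ℂ) : ℂ :=
  ∑' k : ℤ, exp (2 * (Real.pi : ℂ) * I * ((z + 1/2) * (k : ℂ) + (k : ℂ)^2 * τ / 2))

/-- The difference operator `M̃₁` of type `C₂`. -/
noncomputable def M1t (τ h : ℂ) (f : ℂ × ℂ → ℂ) (l : ℂ × ℂ) : ℂ :=
  th1 τ (l.1 + l.2 - h) * th1 τ (l.1 - l.2 - h)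
      / (th1 τ (l.1 + l.2) * th1 τ (l.1 - l.2)) * f (l.1 + h, l.2)
  + th1 τ (l.1 + l.2 + h) * th1 τ (l.1 - l.2 + h)
      / (th1 τ (l.1 + l.2) * th1 τ (l.1 - l.2)) * f (l.1 - h, l.2)
  + th1 τ (l.1 + l.2 - h) * th1 τ (l.1 - l.2 + h)
      / (th1 τ (l.1 + l.2) * th1 τ (l.1 - l.2)) * f (l.1, l.2 + h)
  + th1 τ (l.1 + l.2 + h) * th1 τ (l.1 - l.2 - h)
      / (th1 τ (l.1 + l.2) * th1 τ (l.1 - l.2)) * f (l.1, l.2 - h)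

/-- The difference operator `M̃₂` of type `C₂`. -/
noncomputable def M2t (τ h : ℂ) (f : ℂ × ℂ → ℂ) (l : ℂ × ℂ) : ℂ :=
  (∑ ε ∈ ({1, -1} : Finset ℤ), ∑ ε' ∈ ({1, -1} : Finset ℤ),
    th1 τ ((ε : ℂ) * l.1 + (ε' : ℂ) * l.2 - h)
      / th1 τ ((ε : ℂ) * l.1 + (ε' : ℂ) * l.2 + h)
      * f (l.1 + (ε : ℂ) * h, l.2 + (ε' : ℂ) * h))
  + (∑ ε ∈ ({1, -1} : Finset ℤ), ∑ ε' ∈ ({1, -1} : Finset ℤ),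
      th1 τ ((ε : ℂ) * l.1 + (ε' : ℂ) * l.2 - h)
        * th1 τ ((ε : ℂ) * l.1 + (ε' : ℂ) * l.2 + 2 * h)
        / (th1 τ ((ε : ℂ) * l.1 + (ε' : ℂ) * l.2)
            * th1 τ ((ε : ℂ) * l.1 + (ε' : ℂ) * l.2 + h))) * f l



section aux
open Complex


lemma summable_norm_jt (z τ : ℂ) (hτ : 0 < τ.im) :
    Summable (fun n : ℤ => ‖jacobiTheta₂_term n z τ‖) := by
  apply Summable.of_nonneg_of_le (fun _ => norm_nonneg _)
    (by simpa using norm_jacobiTheta₂_term_le hτ (le_refl |z.im|) (le_refl τ.im))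
  simpa using summable_pow_mul_jacobiTheta₂_term_bound |z.im| hτ 0

def evE : ℤ × ℤ ≃ {p : ℤ × ℤ // Even (p.1 + p.2)} where
  toFun ab := ⟨(ab.1 + ab.2, ab.1 - ab.2), ⟨ab.1, by ring⟩⟩
  invFun p := ((p.1.1 + p.1.2) / 2, (p.1.1 - p.1.2) / 2)
  left_inv ab := by obtain ⟨a, b⟩ := ab; simp [Prod.ext_iff]; omega
  right_inv p := by
    obtain ⟨⟨m, n⟩, ⟨c, hc⟩⟩ := p
    simp [Prod.ext_iff, Subtype.ext_iff] at hc ⊢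
    omega

def evO : ℤ × ℤ ≃ {p : ℤ × ℤ // ¬ Even (p.1 + p.2)} where
  toFun ab := ⟨(ab.1 + ab.2 + 1, ab.1 - ab.2), by
    rw [Int.not_even_iff_odd]
    exact ⟨ab.1, by ring⟩⟩
  invFun p := ((p.1.1 + p.1.2 - 1) / 2, (p.1.1 - p.1.2 - 1) / 2)
  left_inv ab := by obtain ⟨a, b⟩ := ab; simp [Prod.ext_iff]; omega
  right_inv p := by
    obtain ⟨⟨m, n⟩, hmn⟩ := p
    rw [Int.not_even_iff_odd] at hmn
    obtain ⟨c, hc⟩ := hmn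
    simp [Prod.ext_iff, Subtype.ext_iff] at hc ⊢
    omega

lemma evE_apply (ab : ℤ × ℤ) : (evE ab : ℤ × ℤ) = (ab.1 + ab.2, ab.1 - ab.2) := rfl
lemma evO_apply (ab : ℤ × ℤ) : (evO ab : ℤ × ℤ) = (ab.1 + ab.2 + 1, ab.1 - ab.2) := rfl

lemma term_even (a b : ℤ) (u v τ : ℂ) :
    jacobiTheta₂_term (a + b) u τ * jacobiTheta₂_term (a - b) v τ
      = jacobiTheta₂_term a (u + v) (2 * τ) * jacobiTheta₂_term b (u - v) (2 * τ) := by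
  simp only [jacobiTheta₂_term, ← Complex.exp_add]
  congr 1
  push_cast
  ring

lemma term_odd (a b : ℤ) (u v τ : ℂ) :
    jacobiTheta₂_term (a + b + 1) u τ * jacobiTheta₂_term (a - b) v τ
      = cexp ((Real.pi : ℂ) * I * τ + 2 * (Real.pi : ℂ) * I * u) *
        (jacobiTheta₂_term a (u + v + τ) (2 * τ) * jacobiTheta₂_term b (u - v + τ) (2 * τ)) := by
  simp only [jacobiTheta₂_term, ← Complex.exp_add]
  congr 1
  push_cast
  ring

set_option maxHeartbeats 1000000 in
lemma ML {τ : ℂ} (hτ : 0 < τ.im) (u v : ℂ) :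
    jacobiTheta₂ u τ * jacobiTheta₂ v τ
      = jacobiTheta₂ (u + v) (2 * τ) * jacobiTheta₂ (u - v) (2 * τ)
        + cexp ((Real.pi : ℂ) * I * τ + 2 * (Real.pi : ℂ) * I * u) *
          (jacobiTheta₂ (u + v + τ) (2 * τ) * jacobiTheta₂ (u - v + τ) (2 * τ)) := by
  have h2τ : 0 < (2 * τ).im := by
    rw [Complex.mul_im]
    simp
    linarith
  have hsum : Summable (fun p : ℤ × ℤ =>
      jacobiTheta₂_term p.1 u τ * jacobiTheta₂_term p.2 v τ) :=
    summable_mul_of_summable_norm (f := fun n => jacobiTheta₂_term n u τ)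
      (g := fun n => jacobiTheta₂_term n v τ)
      (summable_norm_jt u τ hτ) (summable_norm_jt v τ hτ)
  have step1 : jacobiTheta₂ u τ * jacobiTheta₂ v τ
      = ∑' p : ℤ × ℤ, jacobiTheta₂_term p.1 u τ * jacobiTheta₂_term p.2 v τ :=
    tsum_mul_tsum_of_summable_norm (f := fun n => jacobiTheta₂_term n u τ)
      (g := fun n => jacobiTheta₂_term n v τ)
      (summable_norm_jt u τ hτ) (summable_norm_jt v τ hτ)
  rw [step1,
    ← hsum.tsum_subtype_add_tsum_subtype_compl {p : ℤ × ℤ | Even (p.1 + p.2)}]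
  congr 1
  · show (∑' x : {p : ℤ × ℤ // Even (p.1 + p.2)},
        jacobiTheta₂_term (x : ℤ × ℤ).1 u τ * jacobiTheta₂_term (x : ℤ × ℤ).2 v τ) = _
    rw [← Equiv.tsum_eq evE
      (fun x : {p : ℤ × ℤ // Even (p.1 + p.2)} =>
        jacobiTheta₂_term (x : ℤ × ℤ).1 u τ * jacobiTheta₂_term (x : ℤ × ℤ).2 v τ)]
    have : jacobiTheta₂ (u + v) (2 * τ) * jacobiTheta₂ (u - v) (2 * τ)
        = ∑' z : ℤ × ℤ, jacobiTheta₂_term z.1 (u + v) (2 * τ) *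
            jacobiTheta₂_term z.2 (u - v) (2 * τ) :=
      tsum_mul_tsum_of_summable_norm (f := fun n => jacobiTheta₂_term n (u + v) (2 * τ))
        (g := fun n => jacobiTheta₂_term n (u - v) (2 * τ))
        (summable_norm_jt (u+v) _ h2τ) (summable_norm_jt (u-v) _ h2τ)
    rw [this]
    apply tsum_congr
    intro ab
    rw [evE_apply]
    exact term_even ab.1 ab.2 u v τ
  · show (∑' x : {p : ℤ × ℤ // ¬ Even (p.1 + p.2)},
        jacobiTheta₂_term (x : ℤ × ℤ).1 u τ * jacobiTheta₂_term (x : ℤ × ℤ).2 v τ) = _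
    rw [← Equiv.tsum_eq evO
      (fun x : {p : ℤ × ℤ // ¬ Even (p.1 + p.2)} =>
        jacobiTheta₂_term (x : ℤ × ℤ).1 u τ * jacobiTheta₂_term (x : ℤ × ℤ).2 v τ)]
    have : jacobiTheta₂ (u + v + τ) (2 * τ) * jacobiTheta₂ (u - v + τ) (2 * τ)
        = ∑' z : ℤ × ℤ, jacobiTheta₂_term z.1 (u + v + τ) (2 * τ) *
            jacobiTheta₂_term z.2 (u - v + τ) (2 * τ) :=
      tsum_mul_tsum_of_summable_norm (f := fun n => jacobiTheta₂_term n (u + v + τ) (2 * τ))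
        (g := fun n => jacobiTheta₂_term n (u - v + τ) (2 * τ))
        (summable_norm_jt (u+v+τ) _ h2τ) (summable_norm_jt (u-v+τ) _ h2τ)
    rw [this, ← tsum_mul_left]
    apply tsum_congr
    intro ab
    rw [evO_apply]
    exact term_odd ab.1 ab.2 u v τ

lemma th3_eq (τ z : ℂ) : th3 τ z = jacobiTheta₂ z τ := by
  refine tsum_congr fun k => ?_
  rw [jacobiTheta₂_term]
  congr 1
  ring

lemma th4_eq (τ z : ℂ) : th4 τ z = jacobiTheta₂ (z + 1/2) τ := by
  refine tsum_congr fun k => ?_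
  rw [jacobiTheta₂_term]
  congr 1
  ring

lemma th2_eq (τ z : ℂ) : th2 τ z
    = cexp ((Real.pi : ℂ) * I * τ / 4 + (Real.pi : ℂ) * I * z) * jacobiTheta₂ (z + τ/2) τ := by
  rw [jacobiTheta₂, ← tsum_mul_left]
  refine tsum_congr fun k => ?_
  rw [jacobiTheta₂_term, ← Complex.exp_add]
  congr 1
  ring

lemma th1_eq (τ z : ℂ) : th1 τ z
    = cexp ((Real.pi : ℂ) * I * τ / 4 + (Real.pi : ℂ) * I * (z + 1/2)) *
      jacobiTheta₂ (z + 1/2 + τ/2) τ := by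
  rw [jacobiTheta₂, ← tsum_mul_left]
  refine tsum_congr fun k => ?_
  rw [jacobiTheta₂_term, ← Complex.exp_add]
  congr 1
  ring

noncomputable def Tc (τ z : ℂ) : ℂ := jacobiTheta₂ z (2 * τ)
noncomputable def Tb (τ z : ℂ) : ℂ :=
  cexp ((Real.pi : ℂ) * I * τ / 2 + (Real.pi : ℂ) * I * z) * jacobiTheta₂ (z + τ) (2 * τ)


lemma S3 {τ : ℂ} (hτ : 0 < τ.im) (u v s d : ℂ) (hs : u + v = s) (hd : u - v = d) :
    th3 τ u * th3 τ v = Tc τ s * Tc τ d + Tb τ s * Tb τ d := by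
  subst hs hd
  rw [th3_eq, th3_eq, ML hτ u v]
  simp only [Tb, Tc]
  have : cexp ((Real.pi : ℂ) * I * τ + 2 * (Real.pi : ℂ) * I * u)
      = cexp ((Real.pi : ℂ) * I * τ / 2 + (Real.pi : ℂ) * I * (u + v)) *
        cexp ((Real.pi : ℂ) * I * τ / 2 + (Real.pi : ℂ) * I * (u - v)) := by
    rw [← Complex.exp_add]; congr 1; ring
  rw [this]; ring

lemma S4 {τ : ℂ} (hτ : 0 < τ.im) (u v s d : ℂ) (hs : u + v = s) (hd : u - v = d) :
    th4 τ u * th4 τ v = Tc τ s * Tc τ d - Tb τ s * Tb τ d := by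
  subst hs hd
  rw [th4_eq, th4_eq, ML hτ (u + 1/2) (v + 1/2)]
  simp only [Tb, Tc]
  rw [show u + 1/2 + (v + 1/2) + τ = (u + v + τ) + 1 by ring,
      show u + 1/2 + (v + 1/2) = (u + v) + 1 by ring,
      show u + 1/2 - (v + 1/2) = u - v by ring,
      jacobiTheta₂_add_left, jacobiTheta₂_add_left]
  have : cexp ((Real.pi : ℂ) * I * τ + 2 * (Real.pi : ℂ) * I * (u + 1/2))
      = - (cexp ((Real.pi : ℂ) * I * τ / 2 + (Real.pi : ℂ) * I * (u + v)) *
        cexp ((Real.pi : ℂ) * I * τ / 2 + (Real.pi : ℂ) * I * (u - v))) := by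
    rw [← Complex.exp_add,
      show (Real.pi : ℂ) * I * τ + 2 * (Real.pi : ℂ) * I * (u + 1/2)
        = ((Real.pi : ℂ) * I * τ / 2 + (Real.pi : ℂ) * I * (u + v) +
           ((Real.pi : ℂ) * I * τ / 2 + (Real.pi : ℂ) * I * (u - v))) + (Real.pi : ℂ) * I
        by ring,
      Complex.exp_add, Complex.exp_pi_mul_I]
    ring
  rw [this]; ring

lemma S2 {τ : ℂ} (hτ : 0 < τ.im) (u v s d : ℂ) (hs : u + v = s) (hd : u - v = d) :
    th2 τ u * th2 τ v = Tb τ s * Tc τ d + Tc τ s * Tb τ d := by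
  subst hs hd
  have start : th2 τ u * th2 τ v
      = cexp ((Real.pi : ℂ) * I * τ / 4 + (Real.pi : ℂ) * I * u) *
        cexp ((Real.pi : ℂ) * I * τ / 4 + (Real.pi : ℂ) * I * v) *
        (jacobiTheta₂ (u + τ/2) τ * jacobiTheta₂ (v + τ/2) τ) := by
    rw [th2_eq, th2_eq]; ring
  rw [start, ML hτ (u + τ/2) (v + τ/2),
    show u + τ/2 + (v + τ/2) + τ = (u + v) + 2*τ by ring,
    show u + τ/2 + (v + τ/2) = (u + v) + τ by ring,
    show u + τ/2 - (v + τ/2) + τ = (u - v) + τ by ring,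
    show u + τ/2 - (v + τ/2) = u - v by ring,
    jacobiTheta₂_add_left']
  simp only [Tb, Tc]
  have e1 : cexp ((Real.pi : ℂ) * I * τ / 4 + (Real.pi : ℂ) * I * u) *
      cexp ((Real.pi : ℂ) * I * τ / 4 + (Real.pi : ℂ) * I * v)
      = cexp ((Real.pi : ℂ) * I * τ / 2 + (Real.pi : ℂ) * I * (u + v)) := by
    rw [← Complex.exp_add]; congr 1; ring
  have e2 : cexp ((Real.pi : ℂ) * I * τ / 4 + (Real.pi : ℂ) * I * u) *
      cexp ((Real.pi : ℂ) * I * τ / 4 + (Real.pi : ℂ) * I * v) *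
      cexp ((Real.pi : ℂ) * I * τ + 2 * (Real.pi : ℂ) * I * (u + τ/2)) *
      cexp (-(Real.pi : ℂ) * I * (2 * τ + 2 * (u + v)))
      = cexp ((Real.pi : ℂ) * I * τ / 2 + (Real.pi : ℂ) * I * (u - v)) := by
    rw [← Complex.exp_add, ← Complex.exp_add, ← Complex.exp_add]; congr 1; ring
  linear_combination (jacobiTheta₂ ((u+v) + τ) (2*τ) * jacobiTheta₂ (u-v) (2*τ)) * e1 +
    (jacobiTheta₂ (u+v) (2*τ) * jacobiTheta₂ ((u-v) + τ) (2*τ)) * e2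

lemma S1 {τ : ℂ} (hτ : 0 < τ.im) (u v s d : ℂ) (hs : u + v = s) (hd : u - v = d) :
    th1 τ u * th1 τ v = Tc τ s * Tb τ d - Tb τ s * Tc τ d := by
  subst hs hd
  have start : th1 τ u * th1 τ v
      = cexp ((Real.pi : ℂ) * I * τ / 4 + (Real.pi : ℂ) * I * (u + 1/2)) *
        cexp ((Real.pi : ℂ) * I * τ / 4 + (Real.pi : ℂ) * I * (v + 1/2)) *
        (jacobiTheta₂ (u + 1/2 + τ/2) τ * jacobiTheta₂ (v + 1/2 + τ/2) τ) := by
    rw [th1_eq, th1_eq]; ring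
  rw [start, ML hτ (u + 1/2 + τ/2) (v + 1/2 + τ/2),
    show u + 1/2 + τ/2 + (v + 1/2 + τ/2) + τ = ((u + v) + 2*τ) + 1 by ring,
    show u + 1/2 + τ/2 + (v + 1/2 + τ/2) = ((u + v) + τ) + 1 by ring,
    show u + 1/2 + τ/2 - (v + 1/2 + τ/2) + τ = (u - v) + τ by ring,
    show u + 1/2 + τ/2 - (v + 1/2 + τ/2) = u - v by ring,
    jacobiTheta₂_add_left, jacobiTheta₂_add_left, jacobiTheta₂_add_left']
  simp only [Tb, Tc]
  have e1 : cexp ((Real.pi : ℂ) * I * τ / 4 + (Real.pi : ℂ) * I * (u + 1/2)) *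
      cexp ((Real.pi : ℂ) * I * τ / 4 + (Real.pi : ℂ) * I * (v + 1/2))
      = - cexp ((Real.pi : ℂ) * I * τ / 2 + (Real.pi : ℂ) * I * (u + v)) := by
    rw [← Complex.exp_add,
      show (Real.pi : ℂ) * I * τ / 4 + (Real.pi : ℂ) * I * (u + 1/2) +
          ((Real.pi : ℂ) * I * τ / 4 + (Real.pi : ℂ) * I * (v + 1/2))
        = ((Real.pi : ℂ) * I * τ / 2 + (Real.pi : ℂ) * I * (u + v)) + (Real.pi : ℂ) * I by ring,
      Complex.exp_add, Complex.exp_pi_mul_I]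
    ring
  have e2 : cexp ((Real.pi : ℂ) * I * τ / 4 + (Real.pi : ℂ) * I * (u + 1/2)) *
      cexp ((Real.pi : ℂ) * I * τ / 4 + (Real.pi : ℂ) * I * (v + 1/2)) *
      cexp ((Real.pi : ℂ) * I * τ + 2 * (Real.pi : ℂ) * I * (u + 1/2 + τ/2)) *
      cexp (-(Real.pi : ℂ) * I * (2 * τ + 2 * (u + v)))
      = cexp ((Real.pi : ℂ) * I * τ / 2 + (Real.pi : ℂ) * I * (u - v)) := by
    rw [← Complex.exp_add, ← Complex.exp_add, ← Complex.exp_add,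
      show (Real.pi : ℂ) * I * τ / 4 + (Real.pi : ℂ) * I * (u + 1/2) +
          ((Real.pi : ℂ) * I * τ / 4 + (Real.pi : ℂ) * I * (v + 1/2)) +
          ((Real.pi : ℂ) * I * τ + 2 * (Real.pi : ℂ) * I * (u + 1/2 + τ/2)) +
          -(Real.pi : ℂ) * I * (2 * τ + 2 * (u + v))
        = ((Real.pi : ℂ) * I * τ / 2 + (Real.pi : ℂ) * I * (u - v)) +
          2 * (Real.pi : ℂ) * I by ring,
      Complex.exp_add, Complex.exp_two_pi_mul_I, mul_one]
  linear_combination (jacobiTheta₂ ((u+v) + τ) (2*τ) * jacobiTheta₂ (u-v) (2*τ)) * e1 +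
    (jacobiTheta₂ (u+v) (2*τ) * jacobiTheta₂ ((u-v) + τ) (2*τ)) * e2

lemma th1_neg (τ z : ℂ) : th1 τ (-z) = - th1 τ z := by
  rw [th1_eq, th1_eq,
    show -z + 1/2 + τ/2 = -(z - 1/2 - τ/2) by ring, jacobiTheta₂_neg_left,
    show z + 1/2 + τ/2 = (z - 1/2 + τ/2) + 1 by ring, jacobiTheta₂_add_left,
    show z - 1/2 + τ/2 = (z - 1/2 - τ/2) + τ by ring, jacobiTheta₂_add_left']
  have e1 : cexp ((Real.pi : ℂ) * I * τ / 4 + (Real.pi : ℂ) * I * (z + 1/2)) *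
      cexp (-(Real.pi : ℂ) * I * (τ + 2 * (z - 1/2 - τ/2)))
      = - cexp ((Real.pi : ℂ) * I * τ / 4 + (Real.pi : ℂ) * I * (-z + 1/2)) := by
    rw [← Complex.exp_add,
      show (Real.pi : ℂ) * I * τ / 4 + (Real.pi : ℂ) * I * (z + 1/2) +
          -(Real.pi : ℂ) * I * (τ + 2 * (z - 1/2 - τ/2))
        = ((Real.pi : ℂ) * I * τ / 4 + (Real.pi : ℂ) * I * (-z + 1/2)) + (Real.pi : ℂ) * I
        by ring,
      Complex.exp_add, Complex.exp_pi_mul_I]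
    ring
  linear_combination (jacobiTheta₂ (z - 1/2 - τ/2) τ) * e1

lemma KI2 {τ : ℂ} (hτ : 0 < τ.im) (x c : ℂ) :
    th1 τ (x - c) * th2 τ (x + c) * (th1 τ c * th2 τ c)
      + th1 τ (x + c) * th2 τ (x - c) * (th1 τ c * th2 τ c)
      = th1 τ (2*c) * th2 τ 0 * (th1 τ x * th2 τ x) := by
  have h1 := S1 hτ (x - c) c x (x - 2*c) (by ring) (by ring)
  have h2 := S2 hτ (x + c) c (x + 2*c) x (by ring) (by ring)
  have h3 := S1 hτ (x + c) c (x + 2*c) x (by ring) (by ring)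
  have h4 := S2 hτ (x - c) c x (x - 2*c) (by ring) (by ring)
  have h5 := S1 hτ x (2*c) (x + 2*c) (x - 2*c) (by ring) (by ring)
  have h6 := S2 hτ x 0 x x (by ring) (by ring)
  calc th1 τ (x - c) * th2 τ (x + c) * (th1 τ c * th2 τ c)
      + th1 τ (x + c) * th2 τ (x - c) * (th1 τ c * th2 τ c)
      = (th1 τ (x - c) * th1 τ c) * (th2 τ (x + c) * th2 τ c)
        + (th1 τ (x + c) * th1 τ c) * (th2 τ (x - c) * th2 τ c) := by ring
    _ = (Tc τ x * Tb τ (x - 2*c) - Tb τ x * Tc τ (x - 2*c)) *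
          (Tb τ (x + 2*c) * Tc τ x + Tc τ (x + 2*c) * Tb τ x)
        + (Tc τ (x + 2*c) * Tb τ x - Tb τ (x + 2*c) * Tc τ x) *
          (Tb τ x * Tc τ (x - 2*c) + Tc τ x * Tb τ (x - 2*c)) := by rw [h1, h2, h3, h4]
    _ = (Tc τ (x + 2*c) * Tb τ (x - 2*c) - Tb τ (x + 2*c) * Tc τ (x - 2*c)) *
          (Tb τ x * Tc τ x + Tc τ x * Tb τ x) := by ring
    _ = (th1 τ x * th1 τ (2*c)) * (th2 τ x * th2 τ 0) := by rw [← h5, ← h6]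
    _ = th1 τ (2*c) * th2 τ 0 * (th1 τ x * th2 τ x) := by ring

lemma KI3 {τ : ℂ} (hτ : 0 < τ.im) (x c : ℂ) :
    th1 τ (x - c) * th3 τ (x + c) * (th1 τ c * th3 τ c)
      + th1 τ (x + c) * th3 τ (x - c) * (th1 τ c * th3 τ c)
      = th1 τ (2*c) * th3 τ 0 * (th1 τ x * th3 τ x) := by
  have h1 := S1 hτ (x - c) c x (x - 2*c) (by ring) (by ring)
  have h2 := S3 hτ (x + c) c (x + 2*c) x (by ring) (by ring)
  have h3 := S1 hτ (x + c) c (x + 2*c) x (by ring) (by ring)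
  have h4 := S3 hτ (x - c) c x (x - 2*c) (by ring) (by ring)
  have h5 := S1 hτ x (2*c) (x + 2*c) (x - 2*c) (by ring) (by ring)
  have h6 := S3 hτ x 0 x x (by ring) (by ring)
  calc th1 τ (x - c) * th3 τ (x + c) * (th1 τ c * th3 τ c)
      + th1 τ (x + c) * th3 τ (x - c) * (th1 τ c * th3 τ c)
      = (th1 τ (x - c) * th1 τ c) * (th3 τ (x + c) * th3 τ c)
        + (th1 τ (x + c) * th1 τ c) * (th3 τ (x - c) * th3 τ c) := by ring
    _ = (Tc τ x * Tb τ (x - 2*c) - Tb τ x * Tc τ (x - 2*c)) *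
          (Tc τ (x + 2*c) * Tc τ x + Tb τ (x + 2*c) * Tb τ x)
        + (Tc τ (x + 2*c) * Tb τ x - Tb τ (x + 2*c) * Tc τ x) *
          (Tc τ x * Tc τ (x - 2*c) + Tb τ x * Tb τ (x - 2*c)) := by rw [h1, h2, h3, h4]
    _ = (Tc τ (x + 2*c) * Tb τ (x - 2*c) - Tb τ (x + 2*c) * Tc τ (x - 2*c)) *
          (Tc τ x * Tc τ x + Tb τ x * Tb τ x) := by ring
    _ = (th1 τ x * th1 τ (2*c)) * (th3 τ x * th3 τ 0) := by rw [← h5, ← h6]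
    _ = th1 τ (2*c) * th3 τ 0 * (th1 τ x * th3 τ x) := by ring

lemma KI4 {τ : ℂ} (hτ : 0 < τ.im) (x c : ℂ) :
    th1 τ (x - c) * th4 τ (x + c) * (th1 τ c * th4 τ c)
      + th1 τ (x + c) * th4 τ (x - c) * (th1 τ c * th4 τ c)
      = th1 τ (2*c) * th4 τ 0 * (th1 τ x * th4 τ x) := by
  have h1 := S1 hτ (x - c) c x (x - 2*c) (by ring) (by ring)
  have h2 := S4 hτ (x + c) c (x + 2*c) x (by ring) (by ring)
  have h3 := S1 hτ (x + c) c (x + 2*c) x (by ring) (by ring)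
  have h4 := S4 hτ (x - c) c x (x - 2*c) (by ring) (by ring)
  have h5 := S1 hτ x (2*c) (x + 2*c) (x - 2*c) (by ring) (by ring)
  have h6 := S4 hτ x 0 x x (by ring) (by ring)
  calc th1 τ (x - c) * th4 τ (x + c) * (th1 τ c * th4 τ c)
      + th1 τ (x + c) * th4 τ (x - c) * (th1 τ c * th4 τ c)
      = (th1 τ (x - c) * th1 τ c) * (th4 τ (x + c) * th4 τ c)
        + (th1 τ (x + c) * th1 τ c) * (th4 τ (x - c) * th4 τ c) := by ring
    _ = (Tc τ x * Tb τ (x - 2*c) - Tb τ x * Tc τ (x - 2*c)) *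
          (Tc τ (x + 2*c) * Tc τ x - Tb τ (x + 2*c) * Tb τ x)
        + (Tc τ (x + 2*c) * Tb τ x - Tb τ (x + 2*c) * Tc τ x) *
          (Tc τ x * Tc τ (x - 2*c) - Tb τ x * Tb τ (x - 2*c)) := by rw [h1, h2, h3, h4]
    _ = (Tc τ (x + 2*c) * Tb τ (x - 2*c) - Tb τ (x + 2*c) * Tc τ (x - 2*c)) *
          (Tc τ x * Tc τ x - Tb τ x * Tb τ x) := by ring
    _ = (th1 τ x * th1 τ (2*c)) * (th4 τ x * th4 τ 0) := by rw [← h5, ← h6]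
    _ = th1 τ (2*c) * th4 τ 0 * (th1 τ x * th4 τ x) := by ring

end aux

set_option maxHeartbeats 4000000 in
/-- The products `θᵢ(λ₊)θⱼ(λ₋)` of Bethe-ansatz solutions are common
eigenfunctions of `M̃₁ = H₊H₋` and `M̃₂ = H₊² + H₋²`. -/
theorem stmt_6 (τ : ℂ) (hτ : 0 < τ.im) (h : ℂ) (F G : ℂ → ℂ)
    (hF : F = th2 τ ∨ F = th3 τ ∨ F = th4 τ)
    (hG : G = th2 τ ∨ G = th3 τ ∨ G = th4 τ)
    (hh : th1 τ h * F h * G h ≠ 0) (l : ℂ × ℂ)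
    (hden : ∀ ε ∈ ({1, -1} : Finset ℤ), ∀ ε' ∈ ({1, -1} : Finset ℤ),
      th1 τ ((ε : ℂ) * l.1 + (ε' : ℂ) * l.2) ≠ 0 ∧
      th1 τ ((ε : ℂ) * l.1 + (ε' : ℂ) * l.2 + h) ≠ 0) :
    M1t τ h (fun x => F (x.1 + x.2) * G (x.1 - x.2)) l
      = (th1 τ (2 * h))^2 * F 0 * G 0 / ((th1 τ h)^2 * F h * G h)
          * (F (l.1 + l.2) * G (l.1 - l.2)) ∧
    M2t τ h (fun x => F (x.1 + x.2) * G (x.1 - x.2)) l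
      = (th1 τ (2 * h))^2 / (th1 τ h)^2
          * ((F 0)^2 / (F h)^2 + (G 0)^2 / (G h)^2)
          * (F (l.1 + l.2) * G (l.1 - l.2)) := by
  -- basic nonvanishing facts
  have hth : th1 τ h ≠ 0 := fun e => hh (by rw [e]; ring)
  have hFh : F h ≠ 0 := fun e => hh (by rw [e]; ring)
  have hGh : G h ≠ 0 := fun e => hh (by rw [e]; ring)
  have key : ∀ a b : ℂ, a = b → th1 τ a ≠ 0 → th1 τ b ≠ 0 := fun a b e hn => e ▸ hn
  have keyneg : ∀ a b : ℂ, a = -b → th1 τ a ≠ 0 → th1 τ b ≠ 0 := fun a b e hn hb => by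
    rw [e, th1_neg, hb, neg_zero] at hn; exact hn rfl
  have A0 : th1 τ (l.1 + l.2) ≠ 0 :=
    key _ _ (by push_cast; ring) (hden 1 (by decide) 1 (by decide)).1
  have Ap : th1 τ (l.1 + l.2 + h) ≠ 0 :=
    key _ _ (by push_cast; ring) (hden 1 (by decide) 1 (by decide)).2
  have Am : th1 τ (l.1 + l.2 - h) ≠ 0 :=
    keyneg _ _ (by push_cast; ring) (hden (-1) (by decide) (-1) (by decide)).2
  have B0 : th1 τ (l.1 - l.2) ≠ 0 :=
    key _ _ (by push_cast; ring) (hden 1 (by decide) (-1) (by decide)).1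
  have Bp : th1 τ (l.1 - l.2 + h) ≠ 0 :=
    key _ _ (by push_cast; ring) (hden 1 (by decide) (-1) (by decide)).2
  have Bm : th1 τ (l.1 - l.2 - h) ≠ 0 :=
    keyneg _ _ (by push_cast; ring) (hden (-1) (by decide) 1 (by decide)).2
  -- the key identity for F and G
  have KF : ∀ x : ℂ, th1 τ (x - h) * F (x + h) * (th1 τ h * F h)
      + th1 τ (x + h) * F (x - h) * (th1 τ h * F h)
      = th1 τ (2*h) * F 0 * (th1 τ x * F x) := by
    rcases hF with rfl | rfl | rfl
    exacts [fun x => KI2 hτ x h, fun x => KI3 hτ x h, fun x => KI4 hτ x h]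
  have KG : ∀ x : ℂ, th1 τ (x - h) * G (x + h) * (th1 τ h * G h)
      + th1 τ (x + h) * G (x - h) * (th1 τ h * G h)
      = th1 τ (2*h) * G 0 * (th1 τ x * G x) := by
    rcases hG with rfl | rfl | rfl
    exacts [fun x => KI2 hτ x h, fun x => KI3 hτ x h, fun x => KI4 hτ x h]
  constructor
  · -- M1 part
    have e1 := KF (l.1 + l.2)
    have e2 := KG (l.1 - l.2)
    simp only [M1t]
    rw [show l.1 + h + l.2 = l.1 + l.2 + h by ring,
        show l.1 + h - l.2 = l.1 - l.2 + h by ring,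
        show l.1 - h + l.2 = l.1 + l.2 - h by ring,
        show l.1 - h - l.2 = l.1 - l.2 - h by ring,
        show l.1 + (l.2 + h) = l.1 + l.2 + h by ring,
        show l.1 - (l.2 + h) = l.1 - l.2 - h by ring,
        show l.1 + (l.2 - h) = l.1 + l.2 - h by ring,
        show l.1 - (l.2 - h) = l.1 - l.2 + h by ring]
    field_simp
    rw [mul_comm h 2]
    linear_combination
      ((th1 τ (l.1 - l.2 - h) * G (l.1 - l.2 + h)
          + th1 τ (l.1 - l.2 + h) * G (l.1 - l.2 - h)) * (th1 τ h * G h)) * e1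
      + (th1 τ (2*h) * F 0 * (th1 τ (l.1 + l.2) * F (l.1 + l.2))) * e2
  · simp only [M2t, Finset.sum_insert (by decide : (1:ℤ) ∉ ({-1} : Finset ℤ)),
      Finset.sum_singleton]
    push_cast
    simp only [one_mul, neg_one_mul]
    rw [show l.1 + h + (l.2 + h) = l.1 + l.2 + 2*h by ring,
        show l.1 + h - (l.2 + h) = l.1 - l.2 by ring,
        show l.1 + h + (l.2 + -h) = l.1 + l.2 by ring,
        show l.1 + h - (l.2 + -h) = l.1 - l.2 + 2*h by ring,
        show l.1 + -h + (l.2 + h) = l.1 + l.2 by ring,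
        show l.1 + -h - (l.2 + h) = l.1 - l.2 - 2*h by ring,
        show l.1 + -h + (l.2 + -h) = l.1 + l.2 - 2*h by ring,
        show l.1 + -h - (l.2 + -h) = l.1 - l.2 by ring,
        show l.1 + -l.2 - h = l.1 - l.2 - h by ring,
        show l.1 + -l.2 + h = l.1 - l.2 + h by ring,
        show l.1 + -l.2 + 2*h = l.1 - l.2 + 2*h by ring,
        show l.1 + -l.2 = l.1 - l.2 by ring,
        show -l.1 + l.2 - h = -(l.1 - l.2 + h) by ring,
        show -l.1 + l.2 + h = -(l.1 - l.2 - h) by ring,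
        show -l.1 + l.2 + 2*h = -(l.1 - l.2 - 2*h) by ring,
        show -l.1 + l.2 = -(l.1 - l.2) by ring,
        show -l.1 + -l.2 - h = -(l.1 + l.2 + h) by ring,
        show -l.1 + -l.2 + h = -(l.1 + l.2 - h) by ring,
        show -l.1 + -l.2 + 2*h = -(l.1 + l.2 - 2*h) by ring,
        show -l.1 + -l.2 = -(l.1 + l.2) by ring,
        th1_neg τ (l.1 - l.2 + h), th1_neg τ (l.1 - l.2 - h),
        th1_neg τ (l.1 - l.2 - 2*h), th1_neg τ (l.1 - l.2),
        th1_neg τ (l.1 + l.2 + h), th1_neg τ (l.1 + l.2 - h),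
        th1_neg τ (l.1 + l.2 - 2*h), th1_neg τ (l.1 + l.2)]
    have kF1 := KF (l.1 + l.2)
    have kG1 := KG (l.1 - l.2)
    have kF2 : th1 τ (l.1+l.2) * F (l.1+l.2+2*h) * (th1 τ h * F h)
        + th1 τ (l.1+l.2+2*h) * F (l.1+l.2) * (th1 τ h * F h)
        = th1 τ (2*h) * F 0 * (th1 τ (l.1+l.2+h) * F (l.1+l.2+h)) := by
      have := KF (l.1+l.2+h)
      rw [show l.1+l.2+h-h = l.1+l.2 by ring, show l.1+l.2+h+h = l.1+l.2+2*h by ring] at this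
      exact this
    have kF3 : th1 τ (l.1+l.2-2*h) * F (l.1+l.2) * (th1 τ h * F h)
        + th1 τ (l.1+l.2) * F (l.1+l.2-2*h) * (th1 τ h * F h)
        = th1 τ (2*h) * F 0 * (th1 τ (l.1+l.2-h) * F (l.1+l.2-h)) := by
      have := KF (l.1+l.2-h)
      rw [show l.1+l.2-h-h = l.1+l.2-2*h by ring, show l.1+l.2-h+h = l.1+l.2 by ring] at this
      exact this
    have kG2 : th1 τ (l.1-l.2) * G (l.1-l.2+2*h) * (th1 τ h * G h)
        + th1 τ (l.1-l.2+2*h) * G (l.1-l.2) * (th1 τ h * G h)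
        = th1 τ (2*h) * G 0 * (th1 τ (l.1-l.2+h) * G (l.1-l.2+h)) := by
      have := KG (l.1-l.2+h)
      rw [show l.1-l.2+h-h = l.1-l.2 by ring, show l.1-l.2+h+h = l.1-l.2+2*h by ring] at this
      exact this
    have kG3 : th1 τ (l.1-l.2-2*h) * G (l.1-l.2) * (th1 τ h * G h)
        + th1 τ (l.1-l.2) * G (l.1-l.2-2*h) * (th1 τ h * G h)
        = th1 τ (2*h) * G 0 * (th1 τ (l.1-l.2-h) * G (l.1-l.2-h)) := by
      have := KG (l.1-l.2-h)
      rw [show l.1-l.2-h-h = l.1-l.2-2*h by ring, show l.1-l.2-h+h = l.1-l.2 by ring] at this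
      exact this
    have I2F : (th1 τ (l.1+l.2-h)^2 * th1 τ (l.1+l.2) * F (l.1+l.2+2*h)
        + th1 τ (l.1+l.2+h)^2 * th1 τ (l.1+l.2) * F (l.1+l.2-2*h)
        + th1 τ (l.1+l.2-h)^2 * th1 τ (l.1+l.2+2*h) * F (l.1+l.2)
        + th1 τ (l.1+l.2+h)^2 * th1 τ (l.1+l.2-2*h) * F (l.1+l.2)) * (th1 τ h * F h)^2
        = (th1 τ (2*h) * F 0)^2 *
          (th1 τ (l.1+l.2) * th1 τ (l.1+l.2+h) * th1 τ (l.1+l.2-h) * F (l.1+l.2)) := by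
      linear_combination (th1 τ (2*h) * F 0 * th1 τ (l.1+l.2+h) * th1 τ (l.1+l.2-h)) * kF1
        + th1 τ (l.1+l.2-h)^2 * (th1 τ h * F h) * kF2
        + th1 τ (l.1+l.2+h)^2 * (th1 τ h * F h) * kF3
    have I2G : (th1 τ (l.1-l.2-h)^2 * th1 τ (l.1-l.2) * G (l.1-l.2+2*h)
        + th1 τ (l.1-l.2+h)^2 * th1 τ (l.1-l.2) * G (l.1-l.2-2*h)
        + th1 τ (l.1-l.2-h)^2 * th1 τ (l.1-l.2+2*h) * G (l.1-l.2)
        + th1 τ (l.1-l.2+h)^2 * th1 τ (l.1-l.2-2*h) * G (l.1-l.2)) * (th1 τ h * G h)^2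
        = (th1 τ (2*h) * G 0)^2 *
          (th1 τ (l.1-l.2) * th1 τ (l.1-l.2+h) * th1 τ (l.1-l.2-h) * G (l.1-l.2)) := by
      linear_combination (th1 τ (2*h) * G 0 * th1 τ (l.1-l.2+h) * th1 τ (l.1-l.2-h)) * kG1
        + th1 τ (l.1-l.2-h)^2 * (th1 τ h * G h) * kG2
        + th1 τ (l.1-l.2+h)^2 * (th1 τ h * G h) * kG3
    field_simp [hth, hFh, hGh, A0, Ap, Am, B0, Bp, Bm]
    rw [mul_comm h 2]
    linear_combination
        (G (l.1-l.2) * G h^2 * th1 τ (l.1-l.2)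
          * th1 τ (l.1-l.2+h) * th1 τ (l.1-l.2-h)) * I2F
        + (F (l.1+l.2) * F h^2 * th1 τ (l.1+l.2)
          * th1 τ (l.1+l.2+h) * th1 τ (l.1+l.2-h)) * I2G
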